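/- For any permutation invariant function f on multisets of size n from a countable domain, there exist functions ρ and φ such that f(X) = ρ(∑_{x∈X} φ(x)). -/

import Mathlib

open Finset

private lemma key_aux (b : ℕ) : ∀ N (s t : Multiset ℕ), s.card < b → t.card < b →
    (s.map (b ^ ·)).sum = N → (t.map (b ^ ·)).sum = N → s = t := by
  intro N
  induction N using Nat.strong_induction_on with
  | _ N ih =>
    intro s t hs ht hsN htN
    rcases Nat.lt_or_ge b 2 with hb | hb
    · have hs0 : s = 0 := Multiset.card_eq_zero.mp (by omega)
      have ht0 : t = 0 := Multiset.card_eq_zero.mp (by omega)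
      rw [hs0, ht0]
    · -- decomposition of a multiset
      have decomp : ∀ u : Multiset ℕ,
          u = Multiset.replicate (u.count 0) 0
              + (((u.filter (· ≠ 0)).map (· - 1)).map (· + 1)) := by
        intro u
        have h1 : u.filter (· = 0) = Multiset.replicate (u.count 0) 0 := by
          rw [Multiset.filter_eq']
        have h2 : ((u.filter (· ≠ 0)).map (· - 1)).map (· + 1) = u.filter (· ≠ 0) := by
          rw [Multiset.map_map]
          rw [Multiset.map_congr rfl (fun a ha => ?_), Multiset.map_id]
          have : a ≠ 0 := (Multiset.mem_filter.mp ha).2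
          simp only [Function.comp_apply, id_eq]; omega
        rw [h2, ← h1]
        exact (Multiset.filter_add_not (· = 0) u).symm
      have sumeq : ∀ u : Multiset ℕ,
          (u.map (b ^ ·)).sum
            = u.count 0 + b * (((u.filter (· ≠ 0)).map (· - 1)).map (b ^ ·)).sum := by
        intro u
        conv_lhs => rw [decomp u]
        rw [Multiset.map_add, Multiset.sum_add, Multiset.map_replicate, Multiset.sum_replicate,
          Multiset.map_map, ← Multiset.sum_map_mul_left]
        congr 1
        · simp
        · refine congrArg Multiset.sum (Multiset.map_congr rfl fun a _ => ?_)
          simp [pow_succ, mul_comm]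
      set c := s.count 0 with hc
      set d := t.count 0 with hd
      set s' := (s.filter (· ≠ 0)).map (· - 1) with hs'
      set t' := (t.filter (· ≠ 0)).map (· - 1) with ht'
      have hcb : c < b := lt_of_le_of_lt (Multiset.count_le_card 0 s) hs
      have hdb : d < b := lt_of_le_of_lt (Multiset.count_le_card 0 t) ht
      have hNs : N = c + b * (s'.map (b ^ ·)).sum := by rw [← hsN, sumeq]
      have hNt : N = d + b * (t'.map (b ^ ·)).sum := by rw [← htN, sumeq]
      have hmod1 : N % b = c := by
        rw [hNs, Nat.add_mul_mod_self_left, Nat.mod_eq_of_lt hcb]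
      have hmod2 : N % b = d := by
        rw [hNt, Nat.add_mul_mod_self_left, Nat.mod_eq_of_lt hdb]
      have hcd : c = d := by omega
      have hdiv1 : N / b = (s'.map (b ^ ·)).sum := by
        rw [hNs, Nat.add_mul_div_left _ _ (by omega : 0 < b), Nat.div_eq_of_lt hcb,
          Nat.zero_add]
      have hdiv2 : N / b = (t'.map (b ^ ·)).sum := by
        rw [hNt, Nat.add_mul_div_left _ _ (by omega : 0 < b), Nat.div_eq_of_lt hdb,
          Nat.zero_add]
      have hM : (s'.map (b ^ ·)).sum = (t'.map (b ^ ·)).sum := by omega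
      have hs'c : s'.card < b := by
        rw [hs', Multiset.card_map]
        exact lt_of_le_of_lt (Multiset.card_le_card (Multiset.filter_le _ _)) hs
      have ht'c : t'.card < b := by
        rw [ht', Multiset.card_map]
        exact lt_of_le_of_lt (Multiset.card_le_card (Multiset.filter_le _ _)) ht
      rcases Nat.eq_zero_or_pos ((s'.map (b ^ ·)).sum) with hM0 | hMpos
      · -- both s' and t' are empty
        have hz : ∀ u' : Multiset ℕ, (u'.map (b ^ ·)).sum = 0 → u' = 0 := by
          intro u' h0
          by_contra hne
          obtain ⟨a, ha⟩ := Multiset.exists_mem_of_ne_zero hne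
          have hle : b ^ a ≤ (u'.map (b ^ ·)).sum :=
            Multiset.single_le_sum (by simp) _ (Multiset.mem_map_of_mem _ ha)
          have hbpos : 0 < b ^ a := Nat.pow_pos (n := a) (by omega)
          omega
        have hse : s' = 0 := hz s' hM0
        have hte : t' = 0 := hz t' (by omega)
        rw [decomp s, decomp t, ← hc, ← hd, ← hs', ← ht', hse, hte, hcd]
      · have h2M : 2 * (s'.map (b ^ ·)).sum ≤ b * (s'.map (b ^ ·)).sum :=
          Nat.mul_le_mul_right _ hb
        have hlt : (s'.map (b ^ ·)).sum < N := by omega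
        have := ih _ hlt s' t' hs'c ht'c rfl hM.symm
        rw [decomp s, decomp t, ← hc, ← hd, ← hs', ← ht', hcd, this]

/-- DeepSets decomposition: every permutation invariant function of `n` elements
from a countable domain factors as `ρ (∑ i, φ (x i))`. -/
theorem stmt_10 {𝒳 : Type*} [Countable 𝒳] {n : ℕ}
    (f : (Fin n → 𝒳) → ℝ)
    (hf : ∀ (σ : Equiv.Perm (Fin n)) (x : Fin n → 𝒳), f (x ∘ σ) = f x) :
    ∃ (φ : 𝒳 → ℝ) (ρ : ℝ → ℝ), ∀ x : Fin n → 𝒳, f x = ρ (∑ i, φ (x i)) := by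
  obtain ⟨e, he⟩ := Countable.exists_injective_nat 𝒳
  classical
  set φ : 𝒳 → ℝ := fun a => ((n + 1 : ℕ) ^ (e a) : ℕ) with hφ
  -- key: equal sums imply equal f values
  have main : ∀ x y : Fin n → 𝒳, (∑ i, φ (x i)) = (∑ i, φ (y i)) → f x = f y := by
    intro x y hxy
    set u : Fin n → ℕ := fun i => e (x i) with hu
    set v : Fin n → ℕ := fun i => e (y i) with hv
    have hnat : (∑ i, (n + 1 : ℕ) ^ (u i)) = (∑ i, (n + 1 : ℕ) ^ (v i)) := by
      have : ((∑ i, (n + 1 : ℕ) ^ (u i) : ℕ) : ℝ)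
          = ((∑ i, (n + 1 : ℕ) ^ (v i) : ℕ) : ℝ) := by
        push_cast
        simpa [hφ, hu, hv] using hxy
      exact_mod_cast this
    -- turn into multiset statement
    have hmsum : ∀ w : Fin n → ℕ,
        ((↑(List.ofFn w) : Multiset ℕ).map ((n+1) ^ ·)).sum = ∑ i, (n + 1 : ℕ) ^ (w i) := by
      intro w
      rw [Multiset.map_coe, Multiset.sum_coe, List.map_ofFn, List.sum_ofFn]
      rfl
    have hcard : ∀ w : Fin n → ℕ, (↑(List.ofFn w) : Multiset ℕ).card < n + 1 := by
      intro w
      simp [Multiset.coe_card]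
    have hms := key_aux (n + 1) (∑ i, (n + 1 : ℕ) ^ (u i))
      (↑(List.ofFn u)) (↑(List.ofFn v))
      (hcard u) (hcard v) (hmsum u) (by rw [hmsum v, hnat])
    have hperm : (List.ofFn u).Perm (List.ofFn v) := Multiset.coe_eq_coe.mp hms
    -- sort both
    have hsorted : List.ofFn (u ∘ Tuple.sort u) = List.ofFn (v ∘ Tuple.sort v) :=
      List.Perm.eq_of_sortedLE
        (Tuple.monotone_sort u).sortedLE_ofFn (Tuple.monotone_sort v).sortedLE_ofFn
        (((Tuple.sort u).ofFn_comp_perm u).trans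
          (hperm.trans ((Tuple.sort v).ofFn_comp_perm v).symm))
    have hfun : u ∘ Tuple.sort u = v ∘ Tuple.sort v := List.ofFn_injective hsorted
    have hxyfun : x ∘ Tuple.sort u = y ∘ Tuple.sort v := by
      funext i
      apply he
      exact congrFun hfun i
    have hcomp : x ∘ ((Tuple.sort v).symm.trans (Tuple.sort u)) = y := by
      funext i
      have := congrFun hxyfun ((Tuple.sort v).symm i)
      simpa using this
    rw [← hcomp, hf]
  refine ⟨φ, fun r => if h : ∃ x : Fin n → 𝒳, (∑ i, φ (x i)) = r then f h.choose else 0, ?_⟩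
  intro x
  have hex : ∃ z : Fin n → 𝒳, (∑ i, φ (z i)) = (∑ i, φ (x i)) := ⟨x, rfl⟩
  simp only [dif_pos hex]
  exact (main _ _ hex.choose_spec).symm
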